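/- Let k be a real number with k ≤ -1 or k > 17, and let x be a complex number with |x| = 1. Then (k+5)x^6 + (-k-35)x^5 + (-7k+100)x^4 + (15k-145)x^3 + (-7k+100)x^2 + (-k-35)x + (k+5) ≠ 0. -/

import Mathlib

open Complex

/-- For `k ≤ -1` or `k > 17`, the sextic
`(k+5)x⁶ + (-k-35)x⁵ + (-7k+100)x⁴ + (15k-145)x³ + (-7k+100)x² + (-k-35)x + (k+5)`
has no roots on the unit circle. -/
theorem sextic_ne_zero_on_circle (k : ℝ) (hk : k ≤ -1 ∨ 17 < k)
    (x : ℂ) (hx : ‖x‖ = 1) :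
    ((k : ℂ) + 5) * x ^ 6 + (-(k : ℂ) - 35) * x ^ 5 + (-7 * (k : ℂ) + 100) * x ^ 4 +
      (15 * (k : ℂ) - 145) * x ^ 3 + (-7 * (k : ℂ) + 100) * x ^ 2 +
      (-(k : ℂ) - 35) * x + ((k : ℂ) + 5) ≠ 0 := by
  set s : ℝ := 2 * x.re with hs
  have hx0 : x ≠ 0 := by
    intro h; rw [h] at hx; simp at hx
  -- x * conj x = 1
  have hmul : x * (starRingEnd ℂ) x = 1 := by
    rw [Complex.mul_conj]
    norm_cast
    rw [Complex.normSq_eq_norm_sq, hx]; norm_num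
  -- x + conj x = s
  have hadd : x + (starRingEnd ℂ) x = (s : ℂ) := by
    rw [Complex.add_conj, hs]
  -- hence x^2 = s*x - 1
  have h2 : x ^ 2 = (s : ℂ) * x - 1 := by
    have h' : (starRingEnd ℂ) x = (s : ℂ) - x := by linear_combination hadd
    rw [h'] at hmul
    linear_combination -hmul
  -- bounds on s
  have hsle : -2 ≤ s ∧ s ≤ 2 := by
    have h1 : |x.re| ≤ ‖x‖ := Complex.abs_re_le_norm x
    rw [hx] at h1
    have := abs_le.mp h1
    constructor <;> [linarith [this.1]; linarith [this.2]]
  obtain ⟨hs1, hs2⟩ := hsle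
  -- key factorization
  set μ : ℝ := k * (s ^ 3 - s ^ 2 - 10 * s + 17) + (5 * s ^ 3 - 35 * s ^ 2 + 85 * s - 75)
    with hμdef
  have key : ((k : ℂ) + 5) * x ^ 6 + (-(k : ℂ) - 35) * x ^ 5 + (-7 * (k : ℂ) + 100) * x ^ 4 +
      (15 * (k : ℂ) - 145) * x ^ 3 + (-7 * (k : ℂ) + 100) * x ^ 2 +
      (-(k : ℂ) - 35) * x + ((k : ℂ) + 5) = x ^ 3 * (μ : ℂ) := by
    push_cast [hμdef]
    linear_combination ((5 + (k:ℂ)) + (-35 - (k:ℂ) + 5*(s:ℂ) + (s:ℂ)*(k:ℂ)) * x +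
      (95 - 8*(k:ℂ) - 35*(s:ℂ) - (s:ℂ)*(k:ℂ) + 5*(s:ℂ)^2 + (s:ℂ)^2*(k:ℂ)) * x^2 +
      (-35 - (k:ℂ) + 5*(s:ℂ) + (s:ℂ)*(k:ℂ)) * x^3 + (5 + (k:ℂ)) * x^4) * h2
  rw [key]
  -- μ ≠ 0
  have hA : (1:ℝ) ≤ s ^ 3 - s ^ 2 - 10 * s + 17 := by
    nlinarith [mul_nonneg (by linarith : (0:ℝ) ≤ 2 - s) (by nlinarith : (0:ℝ) ≤ 8 - s - s ^ 2)]
  have hμ : μ ≠ 0 := by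
    rcases hk with hk | hk
    · have : μ < 0 := by
        have hB : 5 * s ^ 3 - 35 * s ^ 2 + 85 * s - 75 ≤ -5 := by
          nlinarith [sq_nonneg (s - 2)]
        nlinarith [mul_nonneg (by linarith : (0:ℝ) ≤ -1 - k) (by linarith : (0:ℝ) ≤ s ^ 3 - s ^ 2 - 10 * s + 17)]
      exact ne_of_lt this
    · have : 0 < μ := by
        have h17 : (0:ℝ) ≤ (s + 2) * (22 * s ^ 2 - 96 * s + 107) := by
          have : (0:ℝ) < 22 * s ^ 2 - 96 * s + 107 := by nlinarith [sq_nonneg (22 * s - 48)]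
          nlinarith
        nlinarith [mul_pos (by linarith : (0:ℝ) < k - 17) (by linarith : (0:ℝ) < s ^ 3 - s ^ 2 - 10 * s + 17)]
      exact ne_of_gt this
  intro h
  rcases mul_eq_zero.mp h with h3 | h3
  · exact hx0 (pow_eq_zero_iff (by norm_num) |>.mp h3)
  · exact hμ (by exact_mod_cast h3)
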